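/- Let V : ℝ³ → ℝ be continuous with V(λx) = λ^s V(x) for all λ > 0 and some s > 2, and V(x) > 0 for |x| = 1, let W(x) = V(x) − (1/4) r(x)², and let m = inf_{ℝ³} W. Then every minimizer x₀ of W satisfies r(x₀)² = 4 s m/(2 − s); in particular all points of the set 𝓜 of minimizers of W have the same (strictly positive) distance from the x₃-axis. -/

import Mathlib

open MeasureTheory Filter Topology

noncomputable section

/-- Three-dimensional Euclidean space. -/
abbrev E3 := EuclideanSpace ℝ (Fin 3)

/-- The distance `r(x) = √(x₁² + x₂²)` from `x` to the `x₃`-axis. -/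
def rax (x : E3) : ℝ := Real.sqrt (x 0 ^ 2 + x 1 ^ 2)

/-- The integrand of the 3D Thomas–Fermi functional:
`V ρ − (Ω²/4) r² ρ + g ρ²`. -/
def tfIntegrand (V : E3 → ℝ) (g Ω : ℝ) (ρ : E3 → ℝ) (x : E3) : ℝ :=
  V x * ρ x - Ω ^ 2 / 4 * rax x ^ 2 * ρ x + g * ρ x ^ 2

/-- Admissible densities for the 3D Thomas–Fermi problem: measurable, nonnegative,
in `L¹ ∩ L²`, with finite potential terms and unit mass. -/
def tfAdmissible (V : E3 → ℝ) (ρ : E3 → ℝ) : Prop :=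
  Measurable ρ ∧ (∀ x, 0 ≤ ρ x) ∧ Integrable ρ ∧ Integrable (fun x => ρ x ^ 2) ∧
    Integrable (fun x => V x * ρ x) ∧ Integrable (fun x => rax x ^ 2 * ρ x) ∧
    (∫ x, ρ x) = 1

/-- The 3D Thomas–Fermi energy `E^TF_{g,Ω}`. -/
def ETF (V : E3 → ℝ) (g Ω : ℝ) : ℝ :=
  sInf { e | ∃ ρ : E3 → ℝ, tfAdmissible V ρ ∧ e = ∫ x, tfIntegrand V g Ω ρ x }

/-- The candidate Thomas–Fermi minimizer with chemical potential `μ`: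
`ρ^TF_{g,Ω}(x) = (1/(2g)) [μ + (Ω²/4) r(x)² − V(x)]₊`. -/
def rhoTF (V : E3 → ℝ) (g Ω μ : ℝ) (x : E3) : ℝ :=
  1 / (2 * g) * max (μ + Ω ^ 2 / 4 * rax x ^ 2 - V x) 0

/-- Homogeneity of degree `s`: `V(λx) = λ^s V(x)` for all `λ > 0`. -/
def Homogeneous (V : E3 → ℝ) (s : ℝ) : Prop :=
  ∀ lam : ℝ, 0 < lam → ∀ x : E3, V (lam • x) = lam ^ s * V x

/-- The effective potential `W(x) = V(x) − (1/4) r(x)²`. -/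
def Wpot (V : E3 → ℝ) (x : E3) : ℝ := V x - 1 / 4 * rax x ^ 2

/-- **All minimizers of `W = V − r²/4` have the same, strictly positive, distance from
the rotation axis**: every minimizer `x₀` satisfies `r(x₀)² = 4 s m/(2 − s)`,
where `m = inf W`. -/
theorem Wpot_minimizers_distance (V : E3 → ℝ) (hVc : Continuous V)
    (s : ℝ) (hs : 2 < s) (hhom : Homogeneous V s)
    (hVpos : ∀ x : E3, ‖x‖ = 1 → 0 < V x)
    (x₀ : E3) (hx₀ : ∀ x : E3, Wpot V x₀ ≤ Wpot V x) :
    rax x₀ ^ 2 = 4 * s * (⨅ x : E3, Wpot V x) / (2 - s) ∧ 0 < rax x₀ := by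
  set R := rax x₀ ^ 2 with hR
  set a := V x₀ with ha
  -- scaling of rax
  have hrs : ∀ lam : ℝ, 0 ≤ lam → ∀ x : E3, rax (lam • x) = lam * rax x := by
    intro lam hlam x
    unfold rax
    simp only [PiLp.smul_apply, smul_eq_mul]
    rw [show (lam * x 0) ^ 2 + (lam * x 1) ^ 2 = lam ^ 2 * (x 0 ^ 2 + x 1 ^ 2) by ring,
      Real.sqrt_mul (sq_nonneg lam), Real.sqrt_sq hlam]
  -- W along the scaling orbit of a point
  have hWs : ∀ lam : ℝ, 0 < lam → ∀ x : E3,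
      Wpot V (lam • x) = lam ^ s * V x - lam ^ 2 * rax x ^ 2 / 4 := by
    intro lam hlam x
    unfold Wpot
    rw [hhom lam hlam x, hrs lam hlam.le x]
    ring
  -- the infimum equals the value at the minimizer
  have hm : (⨅ x : E3, Wpot V x) = Wpot V x₀ :=
    le_antisymm (ciInf_le ⟨Wpot V x₀, fun y ⟨x, hx⟩ => hx ▸ hx₀ x⟩ x₀) (le_ciInf hx₀)
  -- first-order condition from the scaling variation
  have hfoc : s * a - R / 2 = 0 := by
    have h : ∀ lam : ℝ, 0 < lam →
        (1:ℝ) ^ s * a - 1 ^ 2 * R / 4 ≤ lam ^ s * a - lam ^ 2 * R / 4 := by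
      intro lam hlam
      have h1 := hx₀ (lam • x₀)
      rw [hWs lam hlam x₀, ← ha, ← hR] at h1
      have h2 : Wpot V x₀ = a - R / 4 := by unfold Wpot; rw [← ha, ← hR]; ring
      rw [Real.one_rpow]
      rw [h2] at h1
      linarith
    have hmin : IsLocalMin (fun t : ℝ => t ^ s * a - t ^ 2 * R / 4) 1 := by
      filter_upwards [Ioi_mem_nhds (by norm_num : (0:ℝ) < 1)] with t ht
      exact h t ht
    have hder : HasDerivAt (fun t : ℝ => t ^ s * a - t ^ 2 * R / 4) (s * a - R / 2) 1 := by
      have h1 : HasDerivAt (fun t : ℝ => t ^ s) (s * 1 ^ (s - 1)) 1 :=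
        Real.hasDerivAt_rpow_const (Or.inl one_ne_zero)
      have h2 : HasDerivAt (fun t : ℝ => t ^ 2) (2 * 1) 1 := by
        simpa using (hasDerivAt_pow 2 (1:ℝ))
      have h4 := (h1.mul_const a).sub ((h2.mul_const (R/4)))
      have h3 : s * 1 ^ (s-1) * a - 2 * 1 * (R/4) = s * a - R / 2 := by
        rw [Real.one_rpow]; ring
      rw [h3] at h4
      simpa [mul_div_assoc, Pi.sub_def] using h4
    exact hmin.hasDerivAt_eq_zero hder
  -- the infimum is strictly negative
  have hmneg : (⨅ x : E3, Wpot V x) < 0 := by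
    set e : E3 := EuclideanSpace.single 0 (1:ℝ) with he
    have hre : rax e = 1 := by
      unfold rax
      simp [he, EuclideanSpace.single_apply]
    have hne : ‖e‖ = 1 := by simp [he, EuclideanSpace.norm_single]
    have hVe : 0 < V e := hVpos e hne
    -- find a small lam with negative energy
    have hcont : ContinuousAt (fun t : ℝ => t ^ (s - 2) * V e) 0 :=
      (Real.continuousAt_rpow_const 0 (s-2) (Or.inr (by linarith))).mul continuousAt_const
    have h0 : (fun t : ℝ => t ^ (s - 2) * V e) 0 = 0 := by
      simp [Real.zero_rpow (by linarith : s - 2 ≠ 0)]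
    have hev : ∀ᶠ t in 𝓝 (0:ℝ), t ^ (s - 2) * V e < 1/4 := by
      have h1 := hcont.tendsto
      simp only [h0] at h1
      exact h1.eventually_lt_const (by norm_num)
    have hev' : ∀ᶠ t in 𝓝[>] (0:ℝ), t ^ (s - 2) * V e < 1/4 :=
      hev.filter_mono nhdsWithin_le_nhds
    obtain ⟨lam, hlt, hlam⟩ := (hev'.and self_mem_nhdsWithin).exists
    have hsplit : lam ^ s = lam ^ 2 * lam ^ (s - 2) := by
      rw [← Real.rpow_natCast lam 2, ← Real.rpow_add hlam]
      norm_num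
    have hsq : (0:ℝ) < lam ^ 2 := by positivity
    have hWneg : Wpot V (lam • e) < 0 := by
      rw [hWs lam hlam e, hre]
      calc lam ^ s * V e - lam ^ 2 * 1 ^ 2 / 4
          = lam ^ 2 * (lam ^ (s-2) * V e - 1/4) := by rw [hsplit]; ring
        _ < 0 := mul_neg_of_pos_of_neg hsq (by linarith)
    calc (⨅ x : E3, Wpot V x) = Wpot V x₀ := hm
      _ ≤ Wpot V (lam • e) := hx₀ _
      _ < 0 := hWneg
  -- conclude
  have hs0 : s ≠ 0 := by linarith
  have hs2 : (2:ℝ) - s ≠ 0 := by linarith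
  have hmval : (⨅ x : E3, Wpot V x) = a - R / 4 := by
    rw [hm]; unfold Wpot; rw [← ha, ← hR]; ring
  have hRval : R = 4 * s * (⨅ x : E3, Wpot V x) / (2 - s) := by
    rw [hmval]
    field_simp
    linarith [hfoc]
  refine ⟨hRval, ?_⟩
  have hRpos : 0 < R := by
    rw [hRval]
    apply div_pos_of_neg_of_neg
    · have : 0 < s := by linarith
      nlinarith [hmneg]
    · linarith
  have hrnn : 0 ≤ rax x₀ := Real.sqrt_nonneg _
  rcases hrnn.lt_or_eq with h | h
  · exact h
  · exfalso; rw [hR, ← h] at hRpos; simp at hRpos
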